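/- Let (X_t)_{t ∈ ℕ} be a martingale on a filtered probability space with 0 ≤ X_t ≤ 1 almost surely and X_0 = x almost surely for a constant x ∈ (0,1). Let s, d0 be reals with 0 < d0 < s < x, and let τ = inf{ t : X_t < s } be the hitting time of [0, s). Assume that almost surely on the event {τ < ∞} one has X_τ ≥ d0, and that almost surely on the event {τ = ∞} the sequence X_t converges to 1. Then (x − s)/(1 − s) ≤ ℙ(τ = ∞) ≤ (x − d0)/(1 − d0). -/

import Mathlib

open MeasureTheory

/-- Optional-stopping bounds for learning: if `X` is a `[0,1]`-valued martingale started
at `x`, `τ` is the hitting time of `[0, s)` (described via first hitting below `s`),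
`X_τ ≥ d0` a.s. on `{τ < ∞}`, and `X_t → 1` a.s. on `{τ = ∞}`, then
`(x − s)/(1 − s) ≤ ℙ(τ = ∞) ≤ (x − d0)/(1 − d0)`. The event `{τ = ∞}` is the event
that `X` never goes below `s`. -/
theorem martingale_selling_forever_bounds
    {Ω : Type*} {m0 : MeasurableSpace Ω} (μ : Measure Ω) [IsProbabilityMeasure μ]
    (ℱ : Filtration ℕ m0) (X : ℕ → Ω → ℝ)
    (hmart : Martingale X ℱ μ)
    (hbdd : ∀ t, ∀ᵐ ω ∂μ, X t ω ∈ Set.Icc (0 : ℝ) 1)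
    (x s d0 : ℝ) (hx : x ∈ Set.Ioo (0 : ℝ) 1) (hd0 : 0 < d0) (hd0s : d0 < s) (hsx : s < x)
    (hX0 : ∀ᵐ ω ∂μ, X 0 ω = x)
    (hstop : ∀ᵐ ω ∂μ, ∀ t : ℕ, (X t ω < s ∧ ∀ u < t, s ≤ X u ω) → d0 ≤ X t ω)
    (hconv : ∀ᵐ ω ∂μ, (∀ t, s ≤ X t ω) →
      Filter.Tendsto (fun t => X t ω) Filter.atTop (nhds 1)) :
    (x - s) / (1 - s) ≤ (μ {ω | ∀ t, s ≤ X t ω}).toReal ∧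
      (μ {ω | ∀ t, s ≤ X t ω}).toReal ≤ (x - d0) / (1 - d0) := by
  classical
  set A : Set Ω := {ω | ∀ t, s ≤ X t ω} with hA_def
  have hmeasX : ∀ t, Measurable (X t) :=
    fun t => ((hmart.stronglyAdapted t).mono (ℱ.le t)).measurable
  have hA : MeasurableSet A := by
    have : A = ⋂ t, {ω | s ≤ X t ω} := by
      ext ω; simp [hA_def, Set.mem_iInter]
    rw [this]
    exact MeasurableSet.iInter fun t => measurableSet_le measurable_const (hmeasX t)
  -- stopping times
  set τ : ℕ → Ω → ℕ := fun N => hittingBtwn X (Set.Iio s) 0 N with hτ_def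
  have hτst : ∀ N, IsStoppingTime ℱ (fun ω => (τ N ω : WithTop ℕ)) := fun N =>
    hmart.stronglyAdapted.adapted.isStoppingTime_hittingBtwn measurableSet_Iio
  have hτle : ∀ N, ∀ ω, τ N ω ≤ N := fun N ω => hittingBtwn_le ω
  have hτle' : ∀ N, ∀ ω, (τ N ω : WithTop ℕ) ≤ N := fun N ω => WithTop.coe_le_coe.mpr (hτle N ω)
  set Y : ℕ → Ω → ℝ := fun N => stoppedValue X (fun ω => (τ N ω : WithTop ℕ)) with hY_def
  have hYint : ∀ N, Integrable (Y N) μ := fun N =>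
    integrable_stoppedValue ℕ (hτst N) hmart.integrable (hτle' N)
  -- expected value of Y N is x
  have hX0int : ∫ ω, X 0 ω ∂μ = x := by
    rw [integral_congr_ae hX0]
    simp
  have hYmean : ∀ N, ∫ ω, Y N ω ∂μ = x := by
    intro N
    have h0 : IsStoppingTime ℱ (fun _ : Ω => (0 : ℕ)) := isStoppingTime_const ℱ 0
    have hle : (fun _ : Ω => ((0 : ℕ) : WithTop ℕ)) ≤ fun ω => (τ N ω : WithTop ℕ) := fun ω => WithTop.coe_le_coe.mpr (Nat.zero_le _)
    have h₁ : ∫ ω, stoppedValue X (fun _ => (0 : ℕ)) ω ∂μ ≤ ∫ ω, Y N ω ∂μ :=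
      hmart.submartingale.expected_stoppedValue_mono h0 (hτst N) hle (hτle' N)
    have h₂ : ∫ ω, stoppedValue (-X) (fun _ => (0 : ℕ)) ω ∂μ ≤
        ∫ ω, stoppedValue (-X) (fun ω => (τ N ω : WithTop ℕ)) ω ∂μ :=
      hmart.neg.submartingale.expected_stoppedValue_mono h0 (hτst N) hle (hτle' N)
    have hneg : ∀ (σ : Ω → WithTop ℕ), stoppedValue (-X) σ = fun ω => -(stoppedValue X σ ω) := by
      intro σ; ext ω; simp [stoppedValue]
    rw [hneg, hneg, integral_neg, integral_neg, neg_le_neg_iff] at h₂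
    have heq : ∫ ω, Y N ω ∂μ = ∫ ω, stoppedValue X (fun _ => (0 : ℕ)) ω ∂μ :=
      le_antisymm h₂ h₁
    rw [heq, show (stoppedValue X fun _ => ((0 : ℕ) : WithTop ℕ)) = X 0 from rfl, hX0int]
  -- the limiting value
  set Z : Ω → ℝ := fun ω => if h : ∃ t, X t ω < s then X (Nat.find h) ω else 1 with hZ_def
  have hZA : ∀ ω ∈ A, Z ω = 1 := by
    intro ω hω
    have : ¬∃ t, X t ω < s := by
      push_neg
      exact fun t => hω t
    simp [hZ_def, this]
  -- pointwise convergence Y N ω → Z ω (a.e.)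
  have hTend : ∀ᵐ ω ∂μ, Filter.Tendsto (fun N => Y N ω) Filter.atTop (nhds (Z ω)) := by
    filter_upwards [hconv] with ω hconvω
    by_cases h : ∃ t, X t ω < s
    · have hT := Nat.find_spec h
      have heq : ∀ N, Nat.find h ≤ N → Y N ω = X (Nat.find h) ω := by
        intro N hN
        have hex : ∃ j ∈ Set.Icc 0 N, X j ω ∈ Set.Iio s :=
          ⟨Nat.find h, ⟨Nat.zero_le _, hN⟩, hT⟩
        simp only [hY_def, hτ_def, stoppedValue, hittingBtwn, if_pos hex]
        congr 1
        refine le_antisymm (Nat.sInf_le ⟨⟨Nat.zero_le _, hN⟩, hT⟩) ?_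
        exact le_csInf ⟨Nat.find h, ⟨Nat.zero_le _, hN⟩, hT⟩
          fun b hb => Nat.find_min' h hb.2
      have hZω : Z ω = X (Nat.find h) ω := by simp [hZ_def, h]
      rw [hZω]
      refine Filter.Tendsto.congr' ?_ tendsto_const_nhds
      filter_upwards [Filter.eventually_ge_atTop (Nat.find h)] with N hN
      exact (heq N hN).symm
    · have hall : ∀ t, s ≤ X t ω := by
        intro t
        by_contra hc
        exact h ⟨t, not_le.mp hc⟩
      have heq : ∀ N, Y N ω = X N ω := by
        intro N
        have hnex : ¬∃ j ∈ Set.Icc 0 N, X j ω ∈ Set.Iio s := by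
          rintro ⟨j, _, hj⟩
          exact absurd hj (not_lt.mpr (hall j))
        simp only [hY_def, hτ_def, stoppedValue, hittingBtwn, if_neg hnex]
        rfl
      have hZω : Z ω = 1 := by simp [hZ_def, h]
      rw [hZω]
      exact (hconvω hall).congr fun N => (heq N).symm
  -- boundedness
  have hbdd_all : ∀ᵐ ω ∂μ, ∀ t, X t ω ∈ Set.Icc (0 : ℝ) 1 := ae_all_iff.mpr hbdd
  have hYbdd : ∀ᵐ ω ∂μ, ∀ N, ‖Y N ω‖ ≤ 1 := by
    filter_upwards [hbdd_all] with ω hω N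
    have h1 := hω (τ N ω)
    have hYeq : Y N ω = X (τ N ω) ω := rfl
    rw [Real.norm_eq_abs, abs_le, hYeq]
    exact ⟨by linarith [h1.1], h1.2⟩
  -- dominated convergence: ∫ Z = x
  have hZaem : AEStronglyMeasurable Z μ :=
    aestronglyMeasurable_of_tendsto_ae Filter.atTop
      (fun N => (hYint N).aestronglyMeasurable) hTend
  have hZbdd : ∀ᵐ ω ∂μ, ‖Z ω‖ ≤ 1 := by
    filter_upwards [hTend, hYbdd] with ω h₁ h₂
    exact le_of_tendsto' (h₁.norm) fun N => h₂ N
  have hZint : Integrable Z μ :=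
    Integrable.mono' (integrable_const 1) hZaem hZbdd
  have hintZ : ∫ ω, Z ω ∂μ = x := by
    have hDC : Filter.Tendsto (fun N => ∫ ω, Y N ω ∂μ) Filter.atTop (nhds (∫ ω, Z ω ∂μ)) :=
      tendsto_integral_of_dominated_convergence (fun _ => (1 : ℝ))
        (fun N => (hYint N).aestronglyMeasurable) (integrable_const 1)
        (fun N => by filter_upwards [hYbdd] with ω hω; exact hω N) hTend
    have hcc : Filter.Tendsto (fun _ : ℕ => x) Filter.atTop (nhds (∫ ω, Z ω ∂μ)) := by
      refine hDC.congr fun N => hYmean N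
    exact tendsto_nhds_unique hcc tendsto_const_nhds
  -- value of Z on Aᶜ
  have hZcompl : ∀ᵐ ω ∂μ, ω ∈ Aᶜ → d0 ≤ Z ω ∧ Z ω ≤ s := by
    filter_upwards [hstop] with ω hω hωc
    have h : ∃ t, X t ω < s := by
      by_contra hc
      push_neg at hc
      exact hωc fun t => hc t
    have hT := Nat.find_spec h
    have hmin : ∀ u < Nat.find h, s ≤ X u ω := fun u hu =>
      not_lt.mp (Nat.find_min h hu)
    have hZω : Z ω = X (Nat.find h) ω := by simp [hZ_def, h]
    rw [hZω]
    exact ⟨hω _ ⟨hT, hmin⟩, le_of_lt hT⟩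
  -- split the integral
  have hsplit : ∫ ω in A, Z ω ∂μ + ∫ ω in Aᶜ, Z ω ∂μ = ∫ ω, Z ω ∂μ :=
    integral_add_compl hA hZint
  have hintA : ∫ ω in A, Z ω ∂μ = (μ A).toReal := by
    rw [setIntegral_congr_fun hA (fun ω hω => hZA ω hω)]
    simp
    rfl
  set p : ℝ := (μ A).toReal with hp_def
  have hq : (μ Aᶜ).toReal = 1 - p := by
    rw [measure_compl hA (measure_ne_top _ _), measure_univ,
      ENNReal.toReal_sub_of_le prob_le_one ENNReal.one_ne_top, ENNReal.toReal_one]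
  have hIub : ∫ ω in Aᶜ, Z ω ∂μ ≤ s * (1 - p) := by
    have : ∫ ω in Aᶜ, Z ω ∂μ ≤ ∫ _ω in Aᶜ, s ∂μ := by
      refine integral_mono_ae hZint.integrableOn (integrable_const s)
        ((ae_restrict_iff' hA.compl).mpr ?_)
      filter_upwards [hZcompl] with ω hω hωc
      exact (hω hωc).2
    simpa [Measure.real, hq, mul_comm] using this
  have hIlb : d0 * (1 - p) ≤ ∫ ω in Aᶜ, Z ω ∂μ := by
    have : ∫ _ω in Aᶜ, d0 ∂μ ≤ ∫ ω in Aᶜ, Z ω ∂μ := by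
      refine integral_mono_ae (integrable_const d0) hZint.integrableOn
        ((ae_restrict_iff' hA.compl).mpr ?_)
      filter_upwards [hZcompl] with ω hω hωc
      exact (hω hωc).1
    simpa [Measure.real, hq, mul_comm] using this
  have hx_eq : p + ∫ ω in Aᶜ, Z ω ∂μ = x := by
    rw [← hintA, hsplit, hintZ]
  have hs1 : (0 : ℝ) < 1 - s := by linarith [hx.2]
  have hd01 : (0 : ℝ) < 1 - d0 := by linarith [hx.2]
  constructor
  · rw [div_le_iff₀ hs1]
    nlinarith [hIub, hx_eq]
  · rw [le_div_iff₀ hd01]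
    nlinarith [hIlb, hx_eq]
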